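/- Let (U, A, η, a) with twist constant K be a smooth areal solution on [R₀,R*). Then for every R ∈ [R₀,R*) and every θ: (i) a(R,θ) ≤ sup_{θ'} a(R₀,θ'); and (ii) (1/(2R)) ∫₀^{2π} |∂_R (1/a)(R,θ)| dθ ≤ 𝓔_K(R₀). -/

import Mathlib

open Real

noncomputable section

/-- Partial derivative in the first (areal time `R`) variable. -/
def pd1 (f : ℝ → ℝ → ℝ) (x y : ℝ) : ℝ := deriv (fun s => f s y) x

/-- Partial derivative in the second (space `θ`) variable. -/
def pd2 (f : ℝ → ℝ → ℝ) (x y : ℝ) : ℝ := deriv (fun s => f x s) y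

/-- The energy density `E := a⁻¹ U_R² + a U_θ² + (e^{4U}/(4R²))(a⁻¹ A_R² + a A_θ²)`. -/
def Edens (U A a : ℝ → ℝ → ℝ) (r θ : ℝ) : ℝ :=
  (a r θ)⁻¹ * (pd1 U r θ) ^ 2 + a r θ * (pd2 U r θ) ^ 2
    + exp (4 * U r θ) / (4 * r ^ 2) *
        ((a r θ)⁻¹ * (pd1 A r θ) ^ 2 + a r θ * (pd2 A r θ) ^ 2)

/-- The flux density `F := 2 U_R U_θ + (e^{4U}/(2R²)) A_R A_θ`. -/
def Fdens (U A : ℝ → ℝ → ℝ) (r θ : ℝ) : ℝ :=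
  2 * pd1 U r θ * pd2 U r θ
    + exp (4 * U r θ) / (2 * r ^ 2) * (pd1 A r θ * pd2 A r θ)

/-- A smooth solution `(U, A, η, a)` of the `T²`-symmetric vacuum Einstein equations
in areal coordinates, with twist constant `K`, on the time set `D` (times `ℝ` in the
space variable `θ`, with all coefficients `2π`-periodic in `θ` and `a > 0`).
The equations are (A1), (A2), (A3) and the constraints (A4) of the paper. -/
structure ArealSol (D : Set ℝ) (K : ℝ) where
  U : ℝ → ℝ → ℝ
  A : ℝ → ℝ → ℝ
  η : ℝ → ℝ → ℝ
  a : ℝ → ℝ → ℝ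
  smooth_U : ContDiff ℝ (⊤ : ℕ∞) (Function.uncurry U)
  smooth_A : ContDiff ℝ (⊤ : ℕ∞) (Function.uncurry A)
  smooth_η : ContDiff ℝ (⊤ : ℕ∞) (Function.uncurry η)
  smooth_a : ContDiff ℝ (⊤ : ℕ∞) (Function.uncurry a)
  periodic_U : ∀ r θ : ℝ, U r (θ + 2 * π) = U r θ
  periodic_A : ∀ r θ : ℝ, A r (θ + 2 * π) = A r θ
  periodic_η : ∀ r θ : ℝ, η r (θ + 2 * π) = η r θ
  periodic_a : ∀ r θ : ℝ, a r (θ + 2 * π) = a r θ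
  apos : ∀ r ∈ D, ∀ θ : ℝ, 0 < a r θ
  eq_U : ∀ r ∈ D, ∀ θ : ℝ,
    pd1 (fun r' θ' => r' * (a r' θ')⁻¹ * pd1 U r' θ') r θ
      - pd2 (fun r' θ' => r' * a r' θ' * pd2 U r' θ') r θ
      = exp (4 * U r θ) / (2 * r) *
          ((a r θ)⁻¹ * (pd1 A r θ) ^ 2 - a r θ * (pd2 A r θ) ^ 2)
  eq_A : ∀ r ∈ D, ∀ θ : ℝ,
    pd1 (fun r' θ' => r'⁻¹ * (a r' θ')⁻¹ * pd1 A r' θ') r θ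
      - pd2 (fun r' θ' => r'⁻¹ * a r' θ' * pd2 A r' θ') r θ
      = (4 / r) * (a r θ * pd2 U r θ * pd2 A r θ - (a r θ)⁻¹ * pd1 U r θ * pd1 A r θ)
  eq_a : ∀ r ∈ D, ∀ θ : ℝ,
    pd1 (fun r' θ' => Real.log (a r' θ')) r θ
      = -(K ^ 2 * exp (2 * η r θ)) / (2 * r ^ 3)
  eq_ηR : ∀ r ∈ D, ∀ θ : ℝ,
    pd1 η r θ + K ^ 2 / (4 * r ^ 3) * exp (2 * η r θ) = a r θ * r * Edens U A a r θ
  eq_ηθ : ∀ r ∈ D, ∀ θ : ℝ,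
    pd2 η r θ = r * Fdens U A r θ

/-- The areal energy `𝓔(R)`. -/
def En (U A a : ℝ → ℝ → ℝ) (r : ℝ) : ℝ :=
  ∫ θ in (0:ℝ)..(2 * π), Edens U A a r θ

/-- The modified areal energy `𝓔_K(R)`. -/
def EnK (K : ℝ) (U A η a : ℝ → ℝ → ℝ) (r : ℝ) : ℝ :=
  ∫ θ in (0:ℝ)..(2 * π),
    (Edens U A a r θ + K ^ 2 / (4 * r ^ 4) * exp (2 * η r θ) * (a r θ)⁻¹)

end


section Aux
open Function MeasureTheory intervalIntegral Set
namespace PDaux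
variable {f : ℝ → ℝ → ℝ}


variable {f : ℝ → ℝ → ℝ}

theorem hasDerivAt_fst (hf : ContDiff ℝ (⊤ : ℕ∞) (uncurry f)) (x y : ℝ) :
    HasDerivAt (fun s => f s y) (fderiv ℝ (uncurry f) (x, y) (1, 0)) x := by
  have h1 : HasFDerivAt (uncurry f) (fderiv ℝ (uncurry f) (x, y)) (x, y) :=
    (hf.differentiable (by simp) (x, y)).hasFDerivAt
  have h2 : HasDerivAt (fun s : ℝ => ((s, y) : ℝ × ℝ)) ((1 : ℝ), (0 : ℝ)) x :=
    (hasDerivAt_id x).prodMk (hasDerivAt_const x y)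
  exact h1.comp_hasDerivAt x h2

theorem hasDerivAt_snd (hf : ContDiff ℝ (⊤ : ℕ∞) (uncurry f)) (x y : ℝ) :
    HasDerivAt (fun t => f x t) (fderiv ℝ (uncurry f) (x, y) (0, 1)) y := by
  have h1 : HasFDerivAt (uncurry f) (fderiv ℝ (uncurry f) (x, y)) (x, y) :=
    (hf.differentiable (by simp) (x, y)).hasFDerivAt
  have h2 : HasDerivAt (fun t : ℝ => ((x, t) : ℝ × ℝ)) ((0 : ℝ), (1 : ℝ)) y :=
    (hasDerivAt_const y x).prodMk (hasDerivAt_id y)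
  exact h1.comp_hasDerivAt y h2

theorem pd1_eq (hf : ContDiff ℝ (⊤ : ℕ∞) (uncurry f)) (x y : ℝ) :
    pd1 f x y = fderiv ℝ (uncurry f) (x, y) (1, 0) :=
  (hasDerivAt_fst hf x y).deriv

theorem pd2_eq (hf : ContDiff ℝ (⊤ : ℕ∞) (uncurry f)) (x y : ℝ) :
    pd2 f x y = fderiv ℝ (uncurry f) (x, y) (0, 1) :=
  (hasDerivAt_snd hf x y).deriv

theorem hasDerivAt_pd1 (hf : ContDiff ℝ (⊤ : ℕ∞) (uncurry f)) (x y : ℝ) :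
    HasDerivAt (fun s => f s y) (pd1 f x y) x := by
  rw [pd1_eq hf]; exact hasDerivAt_fst hf x y

theorem hasDerivAt_pd2 (hf : ContDiff ℝ (⊤ : ℕ∞) (uncurry f)) (x y : ℝ) :
    HasDerivAt (fun t => f x t) (pd2 f x y) y := by
  rw [pd2_eq hf]; exact hasDerivAt_snd hf x y

theorem contDiff_pd1 (hf : ContDiff ℝ (⊤ : ℕ∞) (uncurry f)) :
    ContDiff ℝ (⊤ : ℕ∞) (uncurry (pd1 f)) := by
  have h : uncurry (pd1 f) = fun p : ℝ × ℝ => fderiv ℝ (uncurry f) p (1, 0) := by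
    funext p
    exact pd1_eq hf p.1 p.2
  rw [h]
  exact (hf.fderiv_right (by exact_mod_cast le_top)).clm_apply contDiff_const

theorem contDiff_pd2 (hf : ContDiff ℝ (⊤ : ℕ∞) (uncurry f)) :
    ContDiff ℝ (⊤ : ℕ∞) (uncurry (pd2 f)) := by
  have h : uncurry (pd2 f) = fun p : ℝ × ℝ => fderiv ℝ (uncurry f) p (0, 1) := by
    funext p
    exact pd2_eq hf p.1 p.2
  rw [h]
  exact (hf.fderiv_right (by exact_mod_cast le_top)).clm_apply contDiff_const

theorem pd_comm (hf : ContDiff ℝ (⊤ : ℕ∞) (uncurry f)) (x y : ℝ) :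
    pd1 (pd2 f) x y = pd2 (pd1 f) x y := by
  have hd : ∀ z : ℝ × ℝ, HasFDerivAt (uncurry f) (fderiv ℝ (uncurry f) z) z := fun z =>
    (hf.differentiable (by simp) z).hasFDerivAt
  have hΦ : ContDiff ℝ (⊤ : ℕ∞) (fderiv ℝ (uncurry f)) := hf.fderiv_right (by exact_mod_cast le_top)
  have hΨ : HasFDerivAt (fderiv ℝ (uncurry f)) (fderiv ℝ (fderiv ℝ (uncurry f)) (x, y)) (x, y) :=
    (hΦ.differentiable (by simp) (x, y)).hasFDerivAt
  have hsymm := second_derivative_symmetric hd hΨ ((1 : ℝ), (0 : ℝ)) ((0 : ℝ), (1 : ℝ))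
  -- pd1 (pd2 f) x y
  have h1 : HasDerivAt (fun s => pd2 f s y)
      ((fderiv ℝ (fderiv ℝ (uncurry f)) (x, y) ((1 : ℝ), (0 : ℝ))) (0, 1)) x := by
    have e : (fun s => pd2 f s y) = fun s => fderiv ℝ (uncurry f) (s, y) (0, 1) := by
      funext s; exact pd2_eq hf s y
    rw [e]
    have h2 : HasDerivAt (fun s : ℝ => ((s, y) : ℝ × ℝ)) ((1 : ℝ), (0 : ℝ)) x :=
      (hasDerivAt_id x).prodMk (hasDerivAt_const x y)
    have h5 := (hΨ.clm_apply (hasFDerivAt_const ((0 : ℝ), (1 : ℝ)) ((x, y) : ℝ × ℝ))).comp_hasDerivAt x h2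
    simpa [Function.comp_def] using h5
  have h4 : HasDerivAt (fun t => pd1 f x t)
      ((fderiv ℝ (fderiv ℝ (uncurry f)) (x, y) ((0 : ℝ), (1 : ℝ))) (1, 0)) y := by
    have e : (fun t => pd1 f x t) = fun t => fderiv ℝ (uncurry f) (x, t) (1, 0) := by
      funext t; exact pd1_eq hf x t
    rw [e]
    have h2 : HasDerivAt (fun t : ℝ => ((x, t) : ℝ × ℝ)) ((0 : ℝ), (1 : ℝ)) y :=
      (hasDerivAt_const y x).prodMk (hasDerivAt_id y)
    have h5 := (hΨ.clm_apply (hasFDerivAt_const ((1 : ℝ), (0 : ℝ)) ((x, y) : ℝ × ℝ))).comp_hasDerivAt y h2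
    simpa [Function.comp_def] using h5
  have e1 : pd1 (pd2 f) x y = _ := h1.deriv
  have e2 : pd2 (pd1 f) x y = _ := h4.deriv
  rw [e1, e2, hsymm]

end PDaux


theorem swap_aux {f : ℝ → ℝ → ℝ} {a b c d : ℝ} (hab : a ≤ b) (hcd : c ≤ d)
    (hf : ContinuousOn (uncurry f) (Icc a b ×ˢ Icc c d)) :
    ∫ x in a..b, ∫ y in c..d, f x y = ∫ y in c..d, ∫ x in a..b, f x y := by
  have hint : Integrable (uncurry f)
      ((volume.restrict (Icc a b)).prod (volume.restrict (Icc c d))) := by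
    rw [Measure.prod_restrict]
    exact hf.integrableOn_compact (isCompact_Icc.prod isCompact_Icc)
  have hswap := MeasureTheory.integral_integral_swap hint
  have e1 : ∀ x : ℝ, ∫ y in c..d, f x y = ∫ y, f x y ∂(volume.restrict (Icc c d)) := by
    intro x
    rw [intervalIntegral.integral_of_le hcd, Measure.restrict_congr_set Ioc_ae_eq_Icc]
  have e2 : ∀ y : ℝ, ∫ x in a..b, f x y = ∫ x, f x y ∂(volume.restrict (Icc a b)) := by
    intro y
    rw [intervalIntegral.integral_of_le hab, Measure.restrict_congr_set Ioc_ae_eq_Icc]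
  calc ∫ x in a..b, ∫ y in c..d, f x y
      = ∫ x, ∫ y, f x y ∂(volume.restrict (Icc c d)) ∂(volume.restrict (Icc a b)) := by
        rw [intervalIntegral.integral_of_le hab, Measure.restrict_congr_set Ioc_ae_eq_Icc]
        exact setIntegral_congr_fun measurableSet_Icc fun x _ => e1 x
    _ = ∫ y, ∫ x, f x y ∂(volume.restrict (Icc a b)) ∂(volume.restrict (Icc c d)) := hswap
    _ = ∫ y in c..d, ∫ x in a..b, f x y := by
        rw [intervalIntegral.integral_of_le hcd, Measure.restrict_congr_set Ioc_ae_eq_Icc]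
        exact setIntegral_congr_fun measurableSet_Icc fun y _ => (e2 y).symm

end Aux

noncomputable section

/-- integrand of EnK -/
def hdK (K : ℝ) (U A η a : ℝ → ℝ → ℝ) (r θ : ℝ) : ℝ :=
  Edens U A a r θ + K ^ 2 / (4 * r ^ 4) * exp (2 * η r θ) * (a r θ)⁻¹

/-- flux (equals r² a F) -/
def Psi (U A a : ℝ → ℝ → ℝ) (r θ : ℝ) : ℝ :=
  2 * r ^ 2 * a r θ * pd1 U r θ * pd2 U r θ
    + exp (4 * U r θ) / 2 * a r θ * pd1 A r θ * pd2 A r θ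

/-- dissipation -/
def Dd (K : ℝ) (U A η a : ℝ → ℝ → ℝ) (r θ : ℝ) : ℝ :=
  2 / r * ((a r θ)⁻¹ * (pd1 U r θ) ^ 2
    + exp (4 * U r θ) / (4 * r ^ 2) * a r θ * (pd2 A r θ) ^ 2
    + K ^ 2 / (2 * r ^ 4) * exp (2 * η r θ) * (a r θ)⁻¹)

end
section Aux3
open Function Set

namespace PDaux2

variable {f : ℝ → ℝ → ℝ}

theorem pd1_periodic (hper : ∀ r θ : ℝ, f r (θ + 2 * Real.pi) = f r θ) (r θ : ℝ) :
    pd1 f r (θ + 2 * Real.pi) = pd1 f r θ := by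
  simp only [pd1]
  congr 1
  funext s
  exact hper s θ

theorem pd2_periodic (hper : ∀ r θ : ℝ, f r (θ + 2 * Real.pi) = f r θ) (r θ : ℝ) :
    pd2 f r (θ + 2 * Real.pi) = pd2 f r θ := by
  simp only [pd2]
  rw [← deriv_comp_add_const (f r) (2 * Real.pi) θ]
  congr 1
  funext t
  exact hper r t

theorem cont_fix1 (hf : ContDiff ℝ (⊤ : ℕ∞) (uncurry f)) (x : ℝ) :
    Continuous (fun θ => f x θ) :=
  hf.continuous.comp (continuous_const.prodMk continuous_id)

theorem cont_fix2 (hf : ContDiff ℝ (⊤ : ℕ∞) (uncurry f)) (θ : ℝ) :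
    Continuous (fun s => f s θ) :=
  hf.continuous.comp (continuous_id.prodMk continuous_const)

end PDaux2

theorem smooth_Psi {U A a : ℝ → ℝ → ℝ} (hU : ContDiff ℝ (⊤ : ℕ∞) (Function.uncurry U))
    (hA : ContDiff ℝ (⊤ : ℕ∞) (Function.uncurry A))
    (ha : ContDiff ℝ (⊤ : ℕ∞) (Function.uncurry a)) :
    ContDiff ℝ (⊤ : ℕ∞) (Function.uncurry (Psi U A a)) := by
  have e : Function.uncurry (Psi U A a)
      = fun p : ℝ × ℝ => 2 * p.1 ^ 2 * a p.1 p.2 * pd1 U p.1 p.2 * pd2 U p.1 p.2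
          + Real.exp (4 * U p.1 p.2) / 2 * a p.1 p.2 * pd1 A p.1 p.2 * pd2 A p.1 p.2 := by
    funext p
    simp only [Function.uncurry, Psi]
  rw [e]
  have h1 : ContDiff ℝ (⊤ : ℕ∞) (fun p : ℝ × ℝ => a p.1 p.2) := ha
  have hU1 : ContDiff ℝ (⊤ : ℕ∞) (fun p : ℝ × ℝ => pd1 U p.1 p.2) := PDaux.contDiff_pd1 hU
  have hU2 : ContDiff ℝ (⊤ : ℕ∞) (fun p : ℝ × ℝ => pd2 U p.1 p.2) := PDaux.contDiff_pd2 hU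
  have hA1 : ContDiff ℝ (⊤ : ℕ∞) (fun p : ℝ × ℝ => pd1 A p.1 p.2) := PDaux.contDiff_pd1 hA
  have hA2 : ContDiff ℝ (⊤ : ℕ∞) (fun p : ℝ × ℝ => pd2 A p.1 p.2) := PDaux.contDiff_pd2 hA
  have hexp : ContDiff ℝ (⊤ : ℕ∞) (fun p : ℝ × ℝ => Real.exp (4 * U p.1 p.2) / 2) :=
    ((contDiff_const.mul (hU : ContDiff ℝ (⊤ : ℕ∞) (fun p : ℝ × ℝ => U p.1 p.2))).exp).div_const 2
  exact ((((contDiff_const.mul (contDiff_fst.pow 2)).mul h1).mul hU1).mul hU2).add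
    (((hexp.mul h1).mul hA1).mul hA2)

theorem periodic_Psi {U A a : ℝ → ℝ → ℝ}
    (hpU : ∀ r θ : ℝ, U r (θ + 2 * Real.pi) = U r θ)
    (hpA : ∀ r θ : ℝ, A r (θ + 2 * Real.pi) = A r θ)
    (hpa : ∀ r θ : ℝ, a r (θ + 2 * Real.pi) = a r θ) (r θ : ℝ) :
    Psi U A a r (θ + 2 * Real.pi) = Psi U A a r θ := by
  simp only [Psi, hpU, hpA, hpa, PDaux2.pd1_periodic hpU, PDaux2.pd2_periodic hpU,
    PDaux2.pd1_periodic hpA, PDaux2.pd2_periodic hpA]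

end Aux3

section ARlemma
open Function Set

theorem aR_eq (R₀ Rs K : ℝ) (S : ArealSol (Set.Ico R₀ Rs) K)
    {r : ℝ} (hr : r ∈ Set.Ico R₀ Rs) (θ : ℝ) :
    pd1 S.a r θ = -(K ^ 2 * Real.exp (2 * S.η r θ)) / (2 * r ^ 3) * S.a r θ := by
  have hvne : S.a r θ ≠ 0 := (S.apos r hr θ).ne'
  have ha1 : HasDerivAt (fun s => S.a s θ) (pd1 S.a r θ) r := PDaux.hasDerivAt_pd1 S.smooth_a r θ
  have hlog : HasDerivAt (fun s => Real.log (S.a s θ)) (pd1 S.a r θ / S.a r θ) r := ha1.log hvne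
  have he2 : pd1 S.a r θ / S.a r θ = -(K ^ 2 * Real.exp (2 * S.η r θ)) / (2 * r ^ 3) := by
    rw [← S.eq_a r hr θ]
    exact hlog.deriv.symm
  rw [div_eq_iff hvne] at he2
  exact he2
end ARlemma

section Key
open Function Set

set_option maxHeartbeats 3000000 in
theorem key_deriv (R₀ Rs K : ℝ) (hR₀ : 0 < R₀) (S : ArealSol (Set.Ico R₀ Rs) K)
    {r θ : ℝ} (hr : r ∈ Set.Ico R₀ Rs) :
    HasDerivAt (fun s => hdK K S.U S.A S.η S.a s θ)
      (pd2 (Psi S.U S.A S.a) r θ / r ^ 2 - Dd K S.U S.A S.η S.a r θ) r := by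
  have hrpos : 0 < r := lt_of_lt_of_le hR₀ hr.1
  have hrne : r ≠ 0 := hrpos.ne'
  have hv : 0 < S.a r θ := S.apos r hr θ
  have hvne : S.a r θ ≠ 0 := hv.ne'
  -- first-variable derivative facts
  have ha1 : HasDerivAt (fun s => S.a s θ) (pd1 S.a r θ) r := PDaux.hasDerivAt_pd1 S.smooth_a r θ
  have hU1 : HasDerivAt (fun s => S.U s θ) (pd1 S.U r θ) r := PDaux.hasDerivAt_pd1 S.smooth_U r θ
  have hA1 : HasDerivAt (fun s => S.A s θ) (pd1 S.A r θ) r := PDaux.hasDerivAt_pd1 S.smooth_A r θ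
  have hη1 : HasDerivAt (fun s => S.η s θ) (pd1 S.η r θ) r := PDaux.hasDerivAt_pd1 S.smooth_η r θ
  have hU11 : HasDerivAt (fun s => pd1 S.U s θ) (pd1 (pd1 S.U) r θ) r :=
    PDaux.hasDerivAt_pd1 (PDaux.contDiff_pd1 S.smooth_U) r θ
  have hU21 : HasDerivAt (fun s => pd2 S.U s θ) (pd1 (pd2 S.U) r θ) r :=
    PDaux.hasDerivAt_pd1 (PDaux.contDiff_pd2 S.smooth_U) r θ
  have hA11 : HasDerivAt (fun s => pd1 S.A s θ) (pd1 (pd1 S.A) r θ) r :=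
    PDaux.hasDerivAt_pd1 (PDaux.contDiff_pd1 S.smooth_A) r θ
  have hA21 : HasDerivAt (fun s => pd2 S.A s θ) (pd1 (pd2 S.A) r θ) r :=
    PDaux.hasDerivAt_pd1 (PDaux.contDiff_pd2 S.smooth_A) r θ
  -- second-variable derivative facts
  have ha2 : HasDerivAt (fun t => S.a r t) (pd2 S.a r θ) θ := PDaux.hasDerivAt_pd2 S.smooth_a r θ
  have hU2 : HasDerivAt (fun t => S.U r t) (pd2 S.U r θ) θ := PDaux.hasDerivAt_pd2 S.smooth_U r θ
  have hA2 : HasDerivAt (fun t => S.A r t) (pd2 S.A r θ) θ := PDaux.hasDerivAt_pd2 S.smooth_A r θ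
  have hU12 : HasDerivAt (fun t => pd1 S.U r t) (pd2 (pd1 S.U) r θ) θ :=
    PDaux.hasDerivAt_pd2 (PDaux.contDiff_pd1 S.smooth_U) r θ
  have hU22 : HasDerivAt (fun t => pd2 S.U r t) (pd2 (pd2 S.U) r θ) θ :=
    PDaux.hasDerivAt_pd2 (PDaux.contDiff_pd2 S.smooth_U) r θ
  have hA12 : HasDerivAt (fun t => pd1 S.A r t) (pd2 (pd1 S.A) r θ) θ :=
    PDaux.hasDerivAt_pd2 (PDaux.contDiff_pd1 S.smooth_A) r θ
  have hA22 : HasDerivAt (fun t => pd2 S.A r t) (pd2 (pd2 S.A) r θ) θ :=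
    PDaux.hasDerivAt_pd2 (PDaux.contDiff_pd2 S.smooth_A) r θ
  -- mixed partials commute
  have hcommU : pd1 (pd2 S.U) r θ = pd2 (pd1 S.U) r θ := PDaux.pd_comm S.smooth_U r θ
  have hcommA : pd1 (pd2 S.A) r θ = pd2 (pd1 S.A) r θ := PDaux.pd_comm S.smooth_A r θ
  -- the equation for a
  have haR : pd1 S.a r θ = -(K ^ 2 * exp (2 * S.η r θ)) / (2 * r ^ 3) * S.a r θ := by
    have hlog : HasDerivAt (fun s => Real.log (S.a s θ)) (pd1 S.a r θ / S.a r θ) r :=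
      ha1.log hvne
    have he2 : pd1 S.a r θ / S.a r θ = -(K ^ 2 * exp (2 * S.η r θ)) / (2 * r ^ 3) := by
      rw [← S.eq_a r hr θ]
      exact hlog.deriv.symm
    field_simp at he2 ⊢
    linear_combination he2
  -- the equation for η
  have hηR := S.eq_ηR r hr θ
  have hηθ := S.eq_ηθ r hr θ
  -- expanded wave equation for U
  have hEqU := S.eq_U r hr θ
  have hLU1 : HasDerivAt (fun s => s * (S.a s θ)⁻¹ * pd1 S.U s θ)
      ((1 * (S.a r θ)⁻¹ + r * (-(pd1 S.a r θ) / S.a r θ ^ 2)) * pd1 S.U r θ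
        + r * (S.a r θ)⁻¹ * pd1 (pd1 S.U) r θ) r :=
    ((hasDerivAt_id r).mul (ha1.inv hvne)).mul hU11
  have hLU2 : HasDerivAt (fun t => r * S.a r t * pd2 S.U r t)
      (r * pd2 S.a r θ * pd2 S.U r θ + r * S.a r θ * pd2 (pd2 S.U) r θ) θ :=
    (ha2.const_mul r).mul hU22
  rw [show pd1 (fun r' θ' => r' * (S.a r' θ')⁻¹ * pd1 S.U r' θ') r θ
      = ((1 * (S.a r θ)⁻¹ + r * (-(pd1 S.a r θ) / S.a r θ ^ 2)) * pd1 S.U r θ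
        + r * (S.a r θ)⁻¹ * pd1 (pd1 S.U) r θ) from hLU1.deriv,
    show pd2 (fun r' θ' => r' * S.a r' θ' * pd2 S.U r' θ') r θ
      = (r * pd2 S.a r θ * pd2 S.U r θ + r * S.a r θ * pd2 (pd2 S.U) r θ) from hLU2.deriv] at hEqU
  -- expanded wave equation for A
  have hEqA := S.eq_A r hr θ
  have hLA1 : HasDerivAt (fun s => s⁻¹ * (S.a s θ)⁻¹ * pd1 S.A s θ)
      ((-1 / r ^ 2 * (S.a r θ)⁻¹ + r⁻¹ * (-(pd1 S.a r θ) / S.a r θ ^ 2)) * pd1 S.A r θ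
        + r⁻¹ * (S.a r θ)⁻¹ * pd1 (pd1 S.A) r θ) r := by
    have hid : HasDerivAt (fun s : ℝ => s⁻¹) (-1 / r ^ 2) r := by
      have h := hasDerivAt_inv hrne; rwa [show -(r ^ 2)⁻¹ = -1 / r ^ 2 by ring] at h
    exact (hid.mul (ha1.inv hvne)).mul hA11
  have hLA2 : HasDerivAt (fun t => r⁻¹ * S.a r t * pd2 S.A r t)
      (r⁻¹ * pd2 S.a r θ * pd2 S.A r θ + r⁻¹ * S.a r θ * pd2 (pd2 S.A) r θ) θ :=
    (ha2.const_mul r⁻¹).mul hA22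
  rw [show pd1 (fun r' θ' => r'⁻¹ * (S.a r' θ')⁻¹ * pd1 S.A r' θ') r θ
      = ((-1 / r ^ 2 * (S.a r θ)⁻¹ + r⁻¹ * (-(pd1 S.a r θ) / S.a r θ ^ 2)) * pd1 S.A r θ
        + r⁻¹ * (S.a r θ)⁻¹ * pd1 (pd1 S.A) r θ) from hLA1.deriv,
    show pd2 (fun r' θ' => r'⁻¹ * S.a r' θ' * pd2 S.A r' θ') r θ
      = (r⁻¹ * pd2 S.a r θ * pd2 S.A r θ + r⁻¹ * S.a r θ * pd2 (pd2 S.A) r θ) from hLA2.deriv]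
    at hEqA
  -- value of pd2 Psi
  have hPsi2 : HasDerivAt (fun t => 2 * r ^ 2 * S.a r t * pd1 S.U r t * pd2 S.U r t
      + exp (4 * S.U r t) / 2 * S.a r t * pd1 S.A r t * pd2 S.A r t)
      (((2 * r ^ 2 * pd2 S.a r θ * pd1 S.U r θ
          + 2 * r ^ 2 * S.a r θ * pd2 (pd1 S.U) r θ) * pd2 S.U r θ
        + 2 * r ^ 2 * S.a r θ * pd1 S.U r θ * pd2 (pd2 S.U) r θ)
       + ((((exp (4 * S.U r θ) * (4 * pd2 S.U r θ) / 2) * S.a r θ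
            + exp (4 * S.U r θ) / 2 * pd2 S.a r θ) * pd1 S.A r θ
          + exp (4 * S.U r θ) / 2 * S.a r θ * pd2 (pd1 S.A) r θ) * pd2 S.A r θ
        + exp (4 * S.U r θ) / 2 * S.a r θ * pd1 S.A r θ * pd2 (pd2 S.A) r θ)) θ := by
    have e1 : HasDerivAt (fun t => 2 * r ^ 2 * S.a r t * pd1 S.U r t * pd2 S.U r t)
        ((2 * r ^ 2 * pd2 S.a r θ * pd1 S.U r θ
          + 2 * r ^ 2 * S.a r θ * pd2 (pd1 S.U) r θ) * pd2 S.U r θ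
        + 2 * r ^ 2 * S.a r θ * pd1 S.U r θ * pd2 (pd2 S.U) r θ) θ :=
      ((ha2.const_mul (2 * r ^ 2)).mul hU12).mul hU22
    have e2 : HasDerivAt (fun t => exp (4 * S.U r t) / 2 * S.a r t * pd1 S.A r t * pd2 S.A r t)
        ((((exp (4 * S.U r θ) * (4 * pd2 S.U r θ) / 2) * S.a r θ
            + exp (4 * S.U r θ) / 2 * pd2 S.a r θ) * pd1 S.A r θ
          + exp (4 * S.U r θ) / 2 * S.a r θ * pd2 (pd1 S.A) r θ) * pd2 S.A r θ
        + exp (4 * S.U r θ) / 2 * S.a r θ * pd1 S.A r θ * pd2 (pd2 S.A) r θ) θ := by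
      have ee : HasDerivAt (fun t => exp (4 * S.U r t) / 2)
          (exp (4 * S.U r θ) * (4 * pd2 S.U r θ) / 2) θ := ((hU2.const_mul 4).exp).div_const 2
      exact (((ee.mul ha2).mul hA12).mul hA22)
    exact e1.add e2
  have hPsival : pd2 (Psi S.U S.A S.a) r θ
      = ((2 * r ^ 2 * pd2 S.a r θ * pd1 S.U r θ
          + 2 * r ^ 2 * S.a r θ * pd2 (pd1 S.U) r θ) * pd2 S.U r θ
        + 2 * r ^ 2 * S.a r θ * pd1 S.U r θ * pd2 (pd2 S.U) r θ)
       + ((((exp (4 * S.U r θ) * (4 * pd2 S.U r θ) / 2) * S.a r θ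
            + exp (4 * S.U r θ) / 2 * pd2 S.a r θ) * pd1 S.A r θ
          + exp (4 * S.U r θ) / 2 * S.a r θ * pd2 (pd1 S.A) r θ) * pd2 S.A r θ
        + exp (4 * S.U r θ) / 2 * S.a r θ * pd1 S.A r θ * pd2 (pd2 S.A) r θ) := by
    have efun : (fun t => Psi S.U S.A S.a r t)
        = (fun t => 2 * r ^ 2 * S.a r t * pd1 S.U r t * pd2 S.U r t
            + exp (4 * S.U r t) / 2 * S.a r t * pd1 S.A r t * pd2 S.A r t) := by
      funext t; simp only [Psi]
    show deriv (fun t => Psi S.U S.A S.a r t) θ = _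
    rw [efun]
    exact hPsi2.deriv
  -- build the R-derivative of the integrand
  have hinva : HasDerivAt (fun s => (S.a s θ)⁻¹) (-(pd1 S.a r θ) / S.a r θ ^ 2) r :=
    ha1.inv hvne
  have hU1sq : HasDerivAt (fun s => (pd1 S.U s θ) ^ 2)
      (2 * pd1 S.U r θ * pd1 (pd1 S.U) r θ) r := by
    simpa [mul_comm, mul_assoc] using hU11.fun_pow 2
  have hU2sq : HasDerivAt (fun s => (pd2 S.U s θ) ^ 2)
      (2 * pd2 S.U r θ * pd1 (pd2 S.U) r θ) r := by
    simpa [mul_comm, mul_assoc] using hU21.fun_pow 2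
  have hA1sq : HasDerivAt (fun s => (pd1 S.A s θ) ^ 2)
      (2 * pd1 S.A r θ * pd1 (pd1 S.A) r θ) r := by
    simpa [mul_comm, mul_assoc] using hA11.fun_pow 2
  have hA2sq : HasDerivAt (fun s => (pd2 S.A s θ) ^ 2)
      (2 * pd2 S.A r θ * pd1 (pd2 S.A) r θ) r := by
    simpa [mul_comm, mul_assoc] using hA21.fun_pow 2
  have hexp4 : HasDerivAt (fun s => exp (4 * S.U s θ))
      (exp (4 * S.U r θ) * (4 * pd1 S.U r θ)) r := (hU1.const_mul 4).exp
  have hden1 : HasDerivAt (fun s : ℝ => 4 * s ^ 2) (4 * (2 * r)) r := by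
    simpa [mul_comm, mul_assoc] using (hasDerivAt_pow 2 r).const_mul 4
  have hfrac : HasDerivAt (fun s => exp (4 * S.U s θ) / (4 * s ^ 2))
      ((exp (4 * S.U r θ) * (4 * pd1 S.U r θ) * (4 * r ^ 2)
        - exp (4 * S.U r θ) * (4 * (2 * r))) / (4 * r ^ 2) ^ 2) r := by
    exact hexp4.div hden1 (by positivity)
  have hexp2 : HasDerivAt (fun s => exp (2 * S.η s θ))
      (exp (2 * S.η r θ) * (2 * pd1 S.η r θ)) r := (hη1.const_mul 2).exp
  have hden2 : HasDerivAt (fun s : ℝ => 4 * s ^ 4) (4 * (4 * r ^ 3)) r := by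
    simpa [mul_comm, mul_assoc] using (hasDerivAt_pow 4 r).const_mul 4
  have hfrac2 : HasDerivAt (fun s : ℝ => K ^ 2 / (4 * s ^ 4))
      ((0 * (4 * r ^ 4) - K ^ 2 * (4 * (4 * r ^ 3))) / (4 * r ^ 4) ^ 2) r :=
    (hasDerivAt_const r (K ^ 2)).div hden2 (by positivity)
  have hbig : HasDerivAt (fun s => (S.a s θ)⁻¹ * (pd1 S.U s θ) ^ 2 + S.a s θ * (pd2 S.U s θ) ^ 2
      + exp (4 * S.U s θ) / (4 * s ^ 2) *
          ((S.a s θ)⁻¹ * (pd1 S.A s θ) ^ 2 + S.a s θ * (pd2 S.A s θ) ^ 2)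
      + K ^ 2 / (4 * s ^ 4) * exp (2 * S.η s θ) * (S.a s θ)⁻¹)
      ((-(pd1 S.a r θ) / S.a r θ ^ 2 * (pd1 S.U r θ) ^ 2
          + (S.a r θ)⁻¹ * (2 * pd1 S.U r θ * pd1 (pd1 S.U) r θ))
        + (pd1 S.a r θ * (pd2 S.U r θ) ^ 2
          + S.a r θ * (2 * pd2 S.U r θ * pd1 (pd2 S.U) r θ))
        + (((exp (4 * S.U r θ) * (4 * pd1 S.U r θ) * (4 * r ^ 2)
              - exp (4 * S.U r θ) * (4 * (2 * r))) / (4 * r ^ 2) ^ 2) *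
             ((S.a r θ)⁻¹ * (pd1 S.A r θ) ^ 2 + S.a r θ * (pd2 S.A r θ) ^ 2)
           + exp (4 * S.U r θ) / (4 * r ^ 2) *
             ((-(pd1 S.a r θ) / S.a r θ ^ 2 * (pd1 S.A r θ) ^ 2
                + (S.a r θ)⁻¹ * (2 * pd1 S.A r θ * pd1 (pd1 S.A) r θ))
              + (pd1 S.a r θ * (pd2 S.A r θ) ^ 2
                + S.a r θ * (2 * pd2 S.A r θ * pd1 (pd2 S.A) r θ))))
        + ((((0 * (4 * r ^ 4) - K ^ 2 * (4 * (4 * r ^ 3))) / (4 * r ^ 4) ^ 2) * exp (2 * S.η r θ)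
             + K ^ 2 / (4 * r ^ 4) * (exp (2 * S.η r θ) * (2 * pd1 S.η r θ))) * (S.a r θ)⁻¹
           + K ^ 2 / (4 * r ^ 4) * exp (2 * S.η r θ) * (-(pd1 S.a r θ) / S.a r θ ^ 2))) r := by
    exact (((hinva.mul hU1sq).add (ha1.mul hU2sq)).add
        (hfrac.mul ((hinva.mul hA1sq).add (ha1.mul hA2sq)))).add
      ((hfrac2.mul hexp2).mul hinva)
  have hgoalfun : (fun s => hdK K S.U S.A S.η S.a s θ)
      = (fun s => (S.a s θ)⁻¹ * (pd1 S.U s θ) ^ 2 + S.a s θ * (pd2 S.U s θ) ^ 2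
      + exp (4 * S.U s θ) / (4 * s ^ 2) *
          ((S.a s θ)⁻¹ * (pd1 S.A s θ) ^ 2 + S.a s θ * (pd2 S.A s θ) ^ 2)
      + K ^ 2 / (4 * s ^ 4) * exp (2 * S.η s θ) * (S.a s θ)⁻¹) := by
    funext s; simp only [hdK, Edens]
  rw [hgoalfun]
  convert hbig using 1
  rw [hPsival]
  simp only [Dd]
  simp only [Edens] at hηR
  rw [hcommU, hcommA, haR]
  rw [haR] at hEqU hEqA
  set v := S.a r θ with hv_def
  set u1 := pd1 S.U r θ; set u2 := pd2 S.U r θ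
  set b1 := pd1 S.A r θ; set b2 := pd2 S.A r θ
  set u11 := pd1 (pd1 S.U) r θ; set u12 := pd2 (pd1 S.U) r θ; set u22 := pd2 (pd2 S.U) r θ
  set c11 := pd1 (pd1 S.A) r θ; set c12 := pd2 (pd1 S.A) r θ; set c22 := pd2 (pd2 S.A) r θ
  set aT := pd2 S.a r θ; set eR := pd1 S.η r θ
  set e4 := exp (4 * S.U r θ) with he4; set e2 := exp (2 * S.η r θ) with he2
  clear_value v u1 u2 b1 b2 u11 u12 u22 c11 c12 c22 aT eR e4 e2
  clear ha1 hU1 hA1 hη1 hU11 hU21 hA11 hA21 ha2 hU2 hA2 hU12 hU22 hA12 hA22 hcommU hcommA hbig hgoalfun hPsi2 hPsival hinva hU1sq hU2sq hA1sq hA2sq hexp4 hden1 hfrac hexp2 hden2 hfrac2 haR hηθ he4 he2 hv_def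
  field_simp at hEqU hEqA hηR ⊢
  linear_combination (-8*r^4*u1) * hEqU + (-2*r^2*e4*b1) * hEqA
    + (-K^2*e2) * hηR
end Key

section Mono
open Function Set intervalIntegral

theorem EnK_mono (R₀ Rs K : ℝ) (hR₀ : 0 < R₀) (S : ArealSol (Set.Ico R₀ Rs) K)
    {r : ℝ} (hr : r ∈ Set.Ico R₀ Rs) :
    EnK K S.U S.A S.η S.a r ≤ EnK K S.U S.A S.η S.a R₀ := by
  have hR₀r : R₀ ≤ r := hr.1
  have hR0mem : R₀ ∈ Set.Ico R₀ Rs := ⟨le_rfl, lt_of_le_of_lt hr.1 hr.2⟩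
  have hsub : Set.Icc R₀ r ⊆ Set.Ico R₀ Rs := fun s hs => ⟨hs.1, lt_of_le_of_lt hs.2 hr.2⟩
  have hsmoothPsi := smooth_Psi S.smooth_U S.smooth_A S.smooth_a
  have hcontPsi2 : Continuous (fun p : ℝ × ℝ => pd2 (Psi S.U S.A S.a) p.1 p.2) :=
    (PDaux.contDiff_pd2 hsmoothPsi).continuous
  set G : ℝ → ℝ → ℝ :=
    fun s θ => pd2 (Psi S.U S.A S.a) s θ / s ^ 2 - Dd K S.U S.A S.η S.a s θ with hG_def
  have hT : ∀ p : ℝ × ℝ, p.1 ∈ Set.Icc R₀ r → (0 < p.1 ∧ 0 < S.a p.1 p.2) := by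
    intro p hp
    exact ⟨lt_of_lt_of_le hR₀ hp.1, S.apos p.1 (hsub hp) p.2⟩
  have hconta : Continuous (fun p : ℝ × ℝ => S.a p.1 p.2) := S.smooth_a.continuous
  have hcontU : Continuous (fun p : ℝ × ℝ => S.U p.1 p.2) := S.smooth_U.continuous
  have hcontη : Continuous (fun p : ℝ × ℝ => S.η p.1 p.2) := S.smooth_η.continuous
  have hcontU1 : Continuous (fun p : ℝ × ℝ => pd1 S.U p.1 p.2) :=
    (PDaux.contDiff_pd1 S.smooth_U).continuous
  have hcontA2 : Continuous (fun p : ℝ × ℝ => pd2 S.A p.1 p.2) :=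
    (PDaux.contDiff_pd2 S.smooth_A).continuous
  have hDcont : ContinuousOn (fun p : ℝ × ℝ => Dd K S.U S.A S.η S.a p.1 p.2)
      (Set.Icc R₀ r ×ˢ (Set.univ : Set ℝ)) := by
    have e : (fun p : ℝ × ℝ => Dd K S.U S.A S.η S.a p.1 p.2)
        = fun p : ℝ × ℝ => 2 / p.1 * ((S.a p.1 p.2)⁻¹ * (pd1 S.U p.1 p.2) ^ 2
            + Real.exp (4 * S.U p.1 p.2) / (4 * p.1 ^ 2) * S.a p.1 p.2 * (pd2 S.A p.1 p.2) ^ 2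
            + K ^ 2 / (2 * p.1 ^ 4) * Real.exp (2 * S.η p.1 p.2) * (S.a p.1 p.2)⁻¹) := by
      funext p; simp only [Dd]
    rw [e]
    have h1ne : ∀ p : ℝ × ℝ, p ∈ Set.Icc R₀ r ×ˢ (Set.univ : Set ℝ) → p.1 ≠ 0 :=
      fun p hp => (hT p hp.1).1.ne'
    have hane : ∀ p : ℝ × ℝ, p ∈ Set.Icc R₀ r ×ˢ (Set.univ : Set ℝ) → S.a p.1 p.2 ≠ 0 :=
      fun p hp => (hT p hp.1).2.ne'
    have hainv : ContinuousOn (fun p : ℝ × ℝ => (S.a p.1 p.2)⁻¹)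
        (Set.Icc R₀ r ×ˢ (Set.univ : Set ℝ)) := hconta.continuousOn.inv₀ hane
    refine ContinuousOn.mul (continuousOn_const.div continuous_fst.continuousOn h1ne) ?_
    refine ContinuousOn.add (ContinuousOn.add ?_ ?_) ?_
    · exact hainv.mul ((hcontU1.pow 2).continuousOn)
    · refine ContinuousOn.mul (ContinuousOn.mul ?_ hconta.continuousOn)
        ((hcontA2.pow 2).continuousOn)
      exact ((Real.continuous_exp.comp (continuous_const.mul hcontU)).continuousOn).div
        ((continuous_const.mul (continuous_fst.pow 2)).continuousOn)
        (fun p hp => mul_ne_zero (by norm_num) (pow_ne_zero _ (h1ne p hp)))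
    · exact (ContinuousOn.mul (ContinuousOn.mul (continuousOn_const.div
        ((continuous_const.mul (continuous_fst.pow 4)).continuousOn)
        (fun p hp => mul_ne_zero (by norm_num) (pow_ne_zero _ (h1ne p hp))))
        ((Real.continuous_exp.comp (continuous_const.mul hcontη)).continuousOn)) hainv)
  have hGcont : ContinuousOn (fun p : ℝ × ℝ => G p.1 p.2)
      (Set.Icc R₀ r ×ˢ (Set.univ : Set ℝ)) := by
    refine ContinuousOn.sub ?_ hDcont
    exact hcontPsi2.continuousOn.div ((continuous_fst.pow 2).continuousOn)
      (fun p hp => pow_ne_zero _ (hT p hp.1).1.ne'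
      )
  -- pointwise FTC in the time direction
  have hstep1 : ∀ θ : ℝ, hdK K S.U S.A S.η S.a r θ - hdK K S.U S.A S.η S.a R₀ θ
      = ∫ s in R₀..r, G s θ := by
    intro θ
    have hder : ∀ s ∈ Set.uIcc R₀ r, HasDerivAt (fun x => hdK K S.U S.A S.η S.a x θ) (G s θ) s := by
      intro s hs
      rw [Set.uIcc_of_le hR₀r] at hs
      exact key_deriv R₀ Rs K hR₀ S (hsub hs)
    have hint : IntervalIntegrable (fun s => G s θ) MeasureTheory.volume R₀ r := by
      apply ContinuousOn.intervalIntegrable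
      rw [Set.uIcc_of_le hR₀r]
      have : (fun s => G s θ) = (fun p : ℝ × ℝ => G p.1 p.2) ∘ (fun s => (s, θ)) := rfl
      rw [this]
      exact hGcont.comp (continuous_id.prodMk continuous_const).continuousOn
        (fun s hs => ⟨hs, trivial⟩)
    exact (intervalIntegral.integral_eq_sub_of_hasDerivAt hder hint).symm
  -- integrability in θ of the energy densities
  have hcont_hd : ∀ x, x ∈ Set.Ico R₀ Rs → Continuous (fun θ => hdK K S.U S.A S.η S.a x θ) := by
    intro x hx
    have hainv : Continuous (fun θ => (S.a x θ)⁻¹) :=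
      Continuous.inv₀ (PDaux2.cont_fix1 S.smooth_a x) (fun θ => (S.apos x hx θ).ne')
    have h1 : Continuous (fun θ => pd1 S.U x θ) :=
      PDaux2.cont_fix1 (PDaux.contDiff_pd1 S.smooth_U) x
    have h2 : Continuous (fun θ => pd2 S.U x θ) :=
      PDaux2.cont_fix1 (PDaux.contDiff_pd2 S.smooth_U) x
    have h3 : Continuous (fun θ => pd1 S.A x θ) :=
      PDaux2.cont_fix1 (PDaux.contDiff_pd1 S.smooth_A) x
    have h4 : Continuous (fun θ => pd2 S.A x θ) :=
      PDaux2.cont_fix1 (PDaux.contDiff_pd2 S.smooth_A) x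
    have h5 : Continuous (fun θ => Real.exp (4 * S.U x θ)) :=
      Real.continuous_exp.comp (continuous_const.mul (PDaux2.cont_fix1 S.smooth_U x))
    have h6 : Continuous (fun θ => Real.exp (2 * S.η x θ)) :=
      Real.continuous_exp.comp (continuous_const.mul (PDaux2.cont_fix1 S.smooth_η x))
    have e : (fun θ => hdK K S.U S.A S.η S.a x θ)
        = fun θ => (S.a x θ)⁻¹ * (pd1 S.U x θ) ^ 2 + S.a x θ * (pd2 S.U x θ) ^ 2
            + Real.exp (4 * S.U x θ) / (4 * x ^ 2) *
                ((S.a x θ)⁻¹ * (pd1 S.A x θ) ^ 2 + S.a x θ * (pd2 S.A x θ) ^ 2)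
            + K ^ 2 / (4 * x ^ 4) * Real.exp (2 * S.η x θ) * (S.a x θ)⁻¹ := by
      funext θ; simp only [hdK, Edens]
    rw [e]
    exact (((hainv.mul (h1.pow 2)).add ((PDaux2.cont_fix1 S.smooth_a x).mul (h2.pow 2))).add
        ((h5.div_const _).mul ((hainv.mul (h3.pow 2)).add
          ((PDaux2.cont_fix1 S.smooth_a x).mul (h4.pow 2))))).add
      ((continuous_const.mul h6).mul hainv)
  have hint_r : IntervalIntegrable (fun θ => hdK K S.U S.A S.η S.a r θ)
      MeasureTheory.volume 0 (2 * Real.pi) := (hcont_hd r hr).intervalIntegrable _ _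
  have hint_R : IntervalIntegrable (fun θ => hdK K S.U S.A S.η S.a R₀ θ)
      MeasureTheory.volume 0 (2 * Real.pi) := (hcont_hd R₀ hR0mem).intervalIntegrable _ _
  have hEnK : ∀ x : ℝ, EnK K S.U S.A S.η S.a x = ∫ θ in (0:ℝ)..(2 * Real.pi),
      hdK K S.U S.A S.η S.a x θ := by
    intro x; simp only [EnK, hdK]
  have hdiff : EnK K S.U S.A S.η S.a r - EnK K S.U S.A S.η S.a R₀
      = ∫ θ in (0:ℝ)..(2 * Real.pi), (∫ s in R₀..r, G s θ) := by
    rw [hEnK, hEnK, ← intervalIntegral.integral_sub hint_r hint_R]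
    exact intervalIntegral.integral_congr (fun θ _ => hstep1 θ)
  -- swap the order of integration
  have hswap : ∫ θ in (0:ℝ)..(2 * Real.pi), (∫ s in R₀..r, G s θ)
      = ∫ s in R₀..r, (∫ θ in (0:ℝ)..(2 * Real.pi), G s θ) := by
    apply swap_aux (by positivity) hR₀r
    have : (uncurry fun θ s => G s θ) = (fun p : ℝ × ℝ => G p.1 p.2) ∘ Prod.swap := rfl
    rw [this]
    exact hGcont.comp continuous_swap.continuousOn (fun p hp => ⟨hp.2, trivial⟩)
  -- the inner integral is nonpositive
  have hinner : ∀ s ∈ Set.Icc R₀ r, (∫ θ in (0:ℝ)..(2 * Real.pi), G s θ) ≤ 0 := by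
    intro s hs
    have hspos : 0 < s := lt_of_lt_of_le hR₀ hs.1
    have hcontP : Continuous (fun θ => pd2 (Psi S.U S.A S.a) s θ) :=
      PDaux2.cont_fix1 (PDaux.contDiff_pd2 hsmoothPsi) s
    have hcontD : Continuous (fun θ => Dd K S.U S.A S.η S.a s θ) := by
      have : (fun θ => Dd K S.U S.A S.η S.a s θ)
          = (fun p : ℝ × ℝ => Dd K S.U S.A S.η S.a p.1 p.2) ∘ (fun θ => (s, θ)) := rfl
      rw [this, ← continuousOn_univ]
      exact hDcont.comp (continuous_const.prodMk continuous_id).continuousOn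
        (fun θ _ => ⟨hs, trivial⟩)
    have hintP : IntervalIntegrable (fun θ => pd2 (Psi S.U S.A S.a) s θ / s ^ 2)
        MeasureTheory.volume 0 (2 * Real.pi) := (hcontP.div_const _).intervalIntegrable _ _
    have hintD : IntervalIntegrable (fun θ => Dd K S.U S.A S.η S.a s θ)
        MeasureTheory.volume 0 (2 * Real.pi) := hcontD.intervalIntegrable _ _
    have hzero : (∫ θ in (0:ℝ)..(2 * Real.pi), pd2 (Psi S.U S.A S.a) s θ) = 0 := by
      have hder : ∀ t ∈ Set.uIcc (0:ℝ) (2 * Real.pi),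
          HasDerivAt (fun t => Psi S.U S.A S.a s t) (pd2 (Psi S.U S.A S.a) s t) t :=
        fun t _ => PDaux.hasDerivAt_pd2 hsmoothPsi s t
      rw [intervalIntegral.integral_eq_sub_of_hasDerivAt hder
        (hcontP.intervalIntegrable _ _)]
      have := periodic_Psi S.periodic_U S.periodic_A S.periodic_a s 0
      simp only [zero_add] at this
      rw [this, sub_self]
    have hDnonneg : ∀ θ ∈ Set.Icc (0:ℝ) (2 * Real.pi), 0 ≤ Dd K S.U S.A S.η S.a s θ := by
      intro θ _
      have hapos := S.apos s (hsub hs) θ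
      simp only [Dd]
      have h1 : (0:ℝ) ≤ (S.a s θ)⁻¹ * (pd1 S.U s θ) ^ 2 :=
        mul_nonneg (inv_nonneg.mpr hapos.le) (sq_nonneg _)
      have h2 : (0:ℝ) ≤ Real.exp (4 * S.U s θ) / (4 * s ^ 2) * S.a s θ * (pd2 S.A s θ) ^ 2 :=
        mul_nonneg (mul_nonneg (div_nonneg (Real.exp_pos _).le (by positivity)) hapos.le)
          (sq_nonneg _)
      have h3 : (0:ℝ) ≤ K ^ 2 / (2 * s ^ 4) * Real.exp (2 * S.η s θ) * (S.a s θ)⁻¹ :=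
        mul_nonneg (mul_nonneg (div_nonneg (sq_nonneg _) (by positivity)) (Real.exp_pos _).le)
          (inv_nonneg.mpr hapos.le)
      exact mul_nonneg (div_nonneg (by norm_num) hspos.le)
        (add_nonneg (add_nonneg h1 h2) h3)
    have e : (∫ θ in (0:ℝ)..(2 * Real.pi), G s θ)
        = (∫ θ in (0:ℝ)..(2 * Real.pi), pd2 (Psi S.U S.A S.a) s θ / s ^ 2)
          - ∫ θ in (0:ℝ)..(2 * Real.pi), Dd K S.U S.A S.η S.a s θ :=
      intervalIntegral.integral_sub hintP hintD
    rw [e, intervalIntegral.integral_div, hzero, zero_div]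
    have := intervalIntegral.integral_nonneg (μ := MeasureTheory.volume) (by positivity : (0:ℝ) ≤ 2 * Real.pi) hDnonneg
    linarith
  -- conclude
  have houter : (∫ s in R₀..r, (∫ θ in (0:ℝ)..(2 * Real.pi), G s θ)) ≤ 0 := by
    have h := intervalIntegral.integral_nonneg (μ := MeasureTheory.volume) hR₀r
      (fun s hs => neg_nonneg.mpr (hinner s hs))
    rw [intervalIntegral.integral_neg] at h
    linarith
  have := hdiff
  rw [hswap] at this
  linarith [houter, this]
end Mono


/-- **Upper bound for the metric coefficient `a`.**
For a smooth areal solution on `[R₀,R*)`: (i) `a(R,θ) ≤ sup a(R₀,·)`; and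
(ii) `(1/(2R)) ∫ |∂_R(1/a)| dθ ≤ 𝓔_K(R₀)`. -/
theorem areal_a_upper_bound
    (R₀ Rs K : ℝ) (hR₀ : 0 < R₀) (hRs : R₀ < Rs)
    (S : ArealSol (Set.Ico R₀ Rs) K) :
    ∀ r ∈ Set.Ico R₀ Rs,
      (∀ θ : ℝ, S.a r θ ≤ ⨆ θ' : ℝ, S.a R₀ θ') ∧
      (1 / (2 * r)) *
          (∫ θ in (0:ℝ)..(2 * Real.pi),
            |pd1 (fun r' θ' => (S.a r' θ')⁻¹) r θ|)
        ≤ EnK K S.U S.A S.η S.a R₀ := by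
  intro r hr
  have hrpos : 0 < r := lt_of_lt_of_le hR₀ hr.1
  have hsub : Set.Icc R₀ r ⊆ Set.Ico R₀ Rs := fun s hs => ⟨hs.1, lt_of_le_of_lt hs.2 hr.2⟩
  have hR0mem : R₀ ∈ Set.Ico R₀ Rs := ⟨le_rfl, hRs⟩
  constructor
  · -- part (i)
    intro θ
    have hmono : S.a r θ ≤ S.a R₀ θ := by
      rcases eq_or_lt_of_le hr.1 with heq | hlt
      · rw [← heq]
      · set g : ℝ → ℝ := fun s => Real.log (S.a s θ) with hg
        have hcont : ContinuousOn g (Set.Icc R₀ r) := by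
          apply ContinuousOn.log
          · exact (PDaux2.cont_fix2 S.smooth_a θ).continuousOn
          · exact fun s hs => (S.apos s (hsub hs) θ).ne'
        have hderiv : ∀ s ∈ Set.Ioo R₀ r, HasDerivAt g (pd1 S.a s θ / S.a s θ) s := fun s hs =>
          (PDaux.hasDerivAt_pd1 S.smooth_a s θ).log
            (S.apos s (hsub (Set.Ioo_subset_Icc_self hs)) θ).ne'
        have hanti : AntitoneOn g (Set.Icc R₀ r) := by
          apply antitoneOn_of_deriv_nonpos (convex_Icc _ _) hcont
          · intro s hs
            rw [interior_Icc] at hs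
            exact (hderiv s hs).differentiableAt.differentiableWithinAt
          · intro s hs
            rw [interior_Icc] at hs
            have hsmem : s ∈ Set.Ico R₀ Rs := hsub (Set.Ioo_subset_Icc_self hs)
            have hspos : 0 < s := lt_of_lt_of_le hR₀ hsmem.1
            have h0 : deriv g s = -(K ^ 2 * Real.exp (2 * S.η s θ)) / (2 * s ^ 3) :=
              S.eq_a s hsmem θ
            rw [h0]
            apply div_nonpos_of_nonpos_of_nonneg
            · have : (0:ℝ) ≤ K ^ 2 * Real.exp (2 * S.η s θ) := by positivity
              linarith
            · positivity
        have hglog : g r ≤ g R₀ :=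
          hanti (Set.left_mem_Icc.mpr hlt.le) ⟨hlt.le, le_rfl⟩ hlt.le
        have := Real.exp_le_exp.mpr hglog
        rwa [hg, Real.exp_log (S.apos r hr θ), Real.exp_log (S.apos R₀ hR0mem θ)] at this
    have hbdd : BddAbove (Set.range (S.a R₀)) := by
      have hc : ContinuousOn (S.a R₀) (Set.Icc 0 (2 * Real.pi)) :=
        (PDaux2.cont_fix1 S.smooth_a R₀).continuousOn
      obtain ⟨M, hM⟩ := (isCompact_Icc.image_of_continuousOn hc).bddAbove
      refine ⟨M, ?_⟩
      rintro x ⟨θ', rfl⟩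
      have hper : Function.Periodic (S.a R₀) (2 * Real.pi) := fun x => S.periodic_a R₀ x
      obtain ⟨y, hy, hxy⟩ := hper.exists_mem_Ico₀ (by positivity) θ'
      rw [hxy]
      exact hM ⟨y, Set.Ico_subset_Icc_self hy, rfl⟩
    exact hmono.trans (le_ciSup hbdd θ)
  · -- part (ii)
    have hvpos : ∀ θ : ℝ, 0 < S.a r θ := S.apos r hr
    have hpt : ∀ θ : ℝ, |pd1 (fun r' θ' => (S.a r' θ')⁻¹) r θ|
        = K ^ 2 * Real.exp (2 * S.η r θ) / (2 * r ^ 3) * (S.a r θ)⁻¹ := by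
      intro θ
      have ha1 : HasDerivAt (fun s => S.a s θ) (pd1 S.a r θ) r :=
        PDaux.hasDerivAt_pd1 S.smooth_a r θ
      have hinv : HasDerivAt (fun s => (S.a s θ)⁻¹) (-(pd1 S.a r θ) / S.a r θ ^ 2) r :=
        ha1.inv (hvpos θ).ne'
      have hval : pd1 (fun r' θ' => (S.a r' θ')⁻¹) r θ = -(pd1 S.a r θ) / S.a r θ ^ 2 :=
        hinv.deriv
      rw [hval, aR_eq R₀ Rs K S hr θ]
      have he : -(-(K ^ 2 * Real.exp (2 * S.η r θ)) / (2 * r ^ 3) * S.a r θ) / S.a r θ ^ 2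
          = K ^ 2 * Real.exp (2 * S.η r θ) / (2 * r ^ 3) * (S.a r θ)⁻¹ := by
        have hv : S.a r θ ≠ 0 := (hvpos θ).ne'
        have hrne : r ≠ 0 := hrpos.ne'
        rw [pow_two]
        field_simp
      rw [he]
      apply abs_of_nonneg
      have h1 : (0:ℝ) ≤ K ^ 2 * Real.exp (2 * S.η r θ) / (2 * r ^ 3) := by positivity
      exact mul_nonneg h1 (inv_nonneg.mpr (hvpos θ).le)
    have hcontainv : Continuous (fun θ => (S.a r θ)⁻¹) :=
      Continuous.inv₀ (PDaux2.cont_fix1 S.smooth_a r) (fun θ => (hvpos θ).ne')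
    have hconte2 : Continuous (fun θ => Real.exp (2 * S.η r θ)) :=
      Real.continuous_exp.comp (continuous_const.mul (PDaux2.cont_fix1 S.smooth_η r))
    have hcontKterm : Continuous
        (fun θ => K ^ 2 / (4 * r ^ 4) * Real.exp (2 * S.η r θ) * (S.a r θ)⁻¹) :=
      (continuous_const.mul hconte2).mul hcontainv
    have hcont_hd : Continuous (fun θ => hdK K S.U S.A S.η S.a r θ) := by
      have h1 : Continuous (fun θ => pd1 S.U r θ) :=
        PDaux2.cont_fix1 (PDaux.contDiff_pd1 S.smooth_U) r
      have h2 : Continuous (fun θ => pd2 S.U r θ) :=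
        PDaux2.cont_fix1 (PDaux.contDiff_pd2 S.smooth_U) r
      have h3 : Continuous (fun θ => pd1 S.A r θ) :=
        PDaux2.cont_fix1 (PDaux.contDiff_pd1 S.smooth_A) r
      have h4 : Continuous (fun θ => pd2 S.A r θ) :=
        PDaux2.cont_fix1 (PDaux.contDiff_pd2 S.smooth_A) r
      have h5 : Continuous (fun θ => Real.exp (4 * S.U r θ)) :=
        Real.continuous_exp.comp (continuous_const.mul (PDaux2.cont_fix1 S.smooth_U r))
      have e : (fun θ => hdK K S.U S.A S.η S.a r θ)
          = fun θ => (S.a r θ)⁻¹ * (pd1 S.U r θ) ^ 2 + S.a r θ * (pd2 S.U r θ) ^ 2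
              + Real.exp (4 * S.U r θ) / (4 * r ^ 2) *
                  ((S.a r θ)⁻¹ * (pd1 S.A r θ) ^ 2 + S.a r θ * (pd2 S.A r θ) ^ 2)
              + K ^ 2 / (4 * r ^ 4) * Real.exp (2 * S.η r θ) * (S.a r θ)⁻¹ := by
        funext θ; simp only [hdK, Edens]
      rw [e]
      exact (((hcontainv.mul (h1.pow 2)).add
          ((PDaux2.cont_fix1 S.smooth_a r).mul (h2.pow 2))).add
        ((h5.div_const _).mul ((hcontainv.mul (h3.pow 2)).add
          ((PDaux2.cont_fix1 S.smooth_a r).mul (h4.pow 2))))).add hcontKterm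
    have step1 : (1 / (2 * r)) *
          (∫ θ in (0:ℝ)..(2 * Real.pi), |pd1 (fun r' θ' => (S.a r' θ')⁻¹) r θ|)
        = ∫ θ in (0:ℝ)..(2 * Real.pi),
            K ^ 2 / (4 * r ^ 4) * Real.exp (2 * S.η r θ) * (S.a r θ)⁻¹ := by
      rw [intervalIntegral.integral_congr (fun θ _ => hpt θ),
        ← intervalIntegral.integral_const_mul]
      apply intervalIntegral.integral_congr
      intro θ _
      ring
    rw [step1]
    have step2 : (∫ θ in (0:ℝ)..(2 * Real.pi),
          K ^ 2 / (4 * r ^ 4) * Real.exp (2 * S.η r θ) * (S.a r θ)⁻¹)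
        ≤ EnK K S.U S.A S.η S.a r := by
      have e : EnK K S.U S.A S.η S.a r = ∫ θ in (0:ℝ)..(2 * Real.pi),
          hdK K S.U S.A S.η S.a r θ := by simp only [EnK, hdK]
      rw [e]
      apply intervalIntegral.integral_mono_on (by positivity)
        (hcontKterm.intervalIntegrable _ _) (hcont_hd.intervalIntegrable _ _)
      intro θ _
      have hE : 0 ≤ Edens S.U S.A S.a r θ := by
        have h1 : (0:ℝ) ≤ (S.a r θ)⁻¹ * (pd1 S.U r θ) ^ 2 :=
          mul_nonneg (inv_nonneg.mpr (hvpos θ).le) (sq_nonneg _)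
        have h2 : (0:ℝ) ≤ S.a r θ * (pd2 S.U r θ) ^ 2 := mul_nonneg (hvpos θ).le (sq_nonneg _)
        have h3 : (0:ℝ) ≤ Real.exp (4 * S.U r θ) / (4 * r ^ 2) *
            ((S.a r θ)⁻¹ * (pd1 S.A r θ) ^ 2 + S.a r θ * (pd2 S.A r θ) ^ 2) := by
          apply mul_nonneg (by positivity)
          exact add_nonneg (mul_nonneg (inv_nonneg.mpr (hvpos θ).le) (sq_nonneg _))
            (mul_nonneg (hvpos θ).le (sq_nonneg _))
        simp only [Edens]
        linarith
      simp only [hdK]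
      linarith
    exact step2.trans (EnK_mono R₀ Rs K hR₀ S hr)
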